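/- Let Λ be an A-lattice in a finite-dimensional normed K_∞-vector space V, and let ω_1,…,ω_d be constructed greedily: ω_1 a shortest nonzero vector of Λ, and ω_i a shortest vector of Λ outside the K_∞-span of ω_1,…,ω_{i−1}. Then ||ω_i|| equals the distance of ω_i from the subspace U_{i−1} = span_{K_∞}(ω_1,…,ω_{i−1}): ||ω_i|| = inf_{u ∈ U_{i−1}} ||ω_i − u||. -/

import Mathlib

open Filter
open scoped Classical

/-- The absolute value `|f| = σ^(ord f)` on the Laurent series field `K∞ = k((π))`,
`π = 1/T`; for a polynomial `f` in `T` this is `σ^(-deg f)`. -/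
noncomputable def absLS (k : Type*) [Field k] (σ : ℝ) (f : LaurentSeries k) : ℝ :=
  if f = 0 then 0 else σ ^ f.order

/-- The embedding of `A = k[T]` into `K∞ = k((π))`, sending `T` to `π⁻¹`. -/
noncomputable def polyToLS (k : Type*) [Field k] : Polynomial k →ₐ[k] LaurentSeries k :=
  Polynomial.aeval (HahnSeries.single (1 : ℤ) (1 : k))⁻¹

/-- The `A`-lattice spanned by the vectors `b i`: all `A`-linear combinations of the `b i`. -/
def latticeA (k : Type*) [Field k] {V : Type*} [AddCommGroup V]
    [Module (LaurentSeries k) V] {d : ℕ} (b : Fin d → V) : Set V :=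
  {x | ∃ a : Fin d → Polynomial k, x = ∑ i, polyToLS k (a i) • b i}

section aux
variable {k : Type*} [Field k]

lemma single_one_inv :
    (HahnSeries.single (1 : ℤ) (1 : k))⁻¹ = HahnSeries.single (-1 : ℤ) (1 : k) := by
  refine inv_eq_of_mul_eq_one_right ?_
  rw [HahnSeries.single_mul_single]
  norm_num

lemma algebraMap_LS (r : k) :
    algebraMap k (LaurentSeries k) r = HahnSeries.single (0 : ℤ) r := by
  rw [HahnSeries.algebraMap_apply', PowerSeries.algebraMap_apply, Algebra.algebraMap_self,
    RingHom.id_apply, HahnSeries.ofPowerSeries_C, HahnSeries.C_apply]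

lemma polyToLS_monomial (r : k) (n : ℕ) :
    polyToLS k (Polynomial.C r * Polynomial.X ^ n) = HahnSeries.single (-(n : ℤ)) r := by
  unfold polyToLS
  rw [single_one_inv, map_mul, map_pow, Polynomial.aeval_X, Polynomial.aeval_C,
    HahnSeries.single_pow, algebraMap_LS, HahnSeries.single_mul_single]
  norm_num

lemma exists_approx (σ : ℝ) (hσ0 : 0 < σ) (hσ1 : σ < 1) (c : LaurentSeries k) :
    ∃ a : Polynomial k, absLS k σ (c - polyToLS k a) ≤ σ := by
  set M : ℕ := (-c.order).toNat + 1 with hM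
  refine ⟨∑ n ∈ Finset.range M, Polynomial.C (c.coeff (-(n : ℤ))) * Polynomial.X ^ n, ?_⟩
  set a : Polynomial k := ∑ n ∈ Finset.range M, Polynomial.C (c.coeff (-(n : ℤ))) * Polynomial.X ^ n with ha
  have hcoeff : ∀ z : ℤ, z ≤ 0 → (c - polyToLS k a).coeff z = 0 := by
    intro z hz
    have hpa : (polyToLS k a).coeff z = ∑ n ∈ Finset.range M,
        (HahnSeries.single (-(n : ℤ)) (c.coeff (-(n : ℤ)))).coeff z := by
      have hc : ∀ x : LaurentSeries k, x.coeff z = HahnSeries.coeff.addMonoidHom z x :=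
        fun _ => rfl
      rw [ha, map_sum, hc, map_sum]
      refine Finset.sum_congr rfl fun n _ => ?_
      rw [polyToLS_monomial]
      rfl
    by_cases h1 : (-z).toNat < M
    · have hz' : z = -((-z).toNat : ℤ) := by omega
      have : (polyToLS k a).coeff z = c.coeff z := by
        rw [hpa, Finset.sum_eq_single ((-z).toNat)]
        · rw [HahnSeries.coeff_single]
          simp only [← hz']
          simp
        · intro n hn hne
          rw [HahnSeries.coeff_single_of_ne]
          omega
        · intro h; exact absurd (Finset.mem_range.mpr h1) h
      rw [HahnSeries.coeff_sub, this, sub_self]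
    · have hcz : c.coeff z = 0 := by
        apply HahnSeries.coeff_eq_zero_of_lt_order
        omega
      have : (polyToLS k a).coeff z = 0 := by
        rw [hpa]
        apply Finset.sum_eq_zero
        intro n hn
        rw [HahnSeries.coeff_single_of_ne]
        simp at hn
        omega
      rw [HahnSeries.coeff_sub, this, hcz, sub_self]
  by_cases he : c - polyToLS k a = 0
  · rw [absLS, if_pos he]; exact le_of_lt hσ0
  · rw [absLS, if_neg he]
    have horder : 1 ≤ (c - polyToLS k a).order := by
      by_contra h
      push_neg at h
      exact (HahnSeries.coeff_order_eq_zero.not.mpr he) (hcoeff _ (by omega))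
    calc σ ^ (c - polyToLS k a).order ≤ σ ^ (1 : ℤ) :=
          zpow_le_zpow_right_of_le_one₀ hσ0 (le_of_lt hσ1) horder
      _ = σ := zpow_one σ

lemma absLS_nonneg (σ : ℝ) (hσ0 : 0 < σ) (c : LaurentSeries k) : 0 ≤ absLS k σ c := by
  rw [absLS]
  split
  · exact le_rfl
  · exact (zpow_pos hσ0 _).le

lemma absLS_neg_one (σ : ℝ) : absLS k σ (-1) = 1 := by
  rw [absLS, if_neg (by simp), HahnSeries.order_neg, HahnSeries.order_one, zpow_zero]

variable {V : Type*} [AddCommGroup V] [Module (LaurentSeries k) V] {d : ℕ} {b : Fin d → V}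

lemma lattice_zero : (0 : V) ∈ latticeA k b :=
  ⟨0, by simp⟩

lemma lattice_sub {x y : V} (hx : x ∈ latticeA k b) (hy : y ∈ latticeA k b) :
    x - y ∈ latticeA k b := by
  obtain ⟨ax, hax⟩ := hx
  obtain ⟨ay, hay⟩ := hy
  refine ⟨ax - ay, ?_⟩
  rw [hax, hay, ← Finset.sum_sub_distrib]
  refine Finset.sum_congr rfl fun i _ => ?_
  rw [Pi.sub_apply, map_sub, sub_smul]

lemma lattice_smul (a : Polynomial k) {x : V} (hx : x ∈ latticeA k b) :
    polyToLS k a • x ∈ latticeA k b := by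
  obtain ⟨ax, hax⟩ := hx
  refine ⟨fun i => a * ax i, ?_⟩
  rw [hax, Finset.smul_sum]
  refine Finset.sum_congr rfl fun i _ => ?_
  rw [map_mul, smul_smul]

lemma lattice_sum {ι : Type*} (s : Finset ι) (f : ι → V)
    (hf : ∀ t ∈ s, f t ∈ latticeA k b) : (∑ t ∈ s, f t) ∈ latticeA k b := by
  induction s using Finset.cons_induction with
  | empty => simpa using (lattice_zero : (0:V) ∈ latticeA k b)
  | cons t s hts ih =>
      rw [Finset.sum_cons]
      have h1 : f t ∈ latticeA k b := hf t (Finset.mem_cons_self t s)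
      have h2 : (∑ u ∈ s, f u) ∈ latticeA k b := ih fun u hu => hf u (Finset.mem_cons_of_mem hu)
      have := lattice_sub h1 (lattice_sub (lattice_zero) h2)
      simpa using this

end aux

/-- For a greedy successive-minimum sequence `ω` of an `A`-lattice, the norm of `ω i` equals
its distance to the span of the previous vectors. -/
theorem stmt13 {k V : Type*} [Field k] [AddCommGroup V] [Module (LaurentSeries k) V]
    (σ : ℝ) (hσ0 : 0 < σ) (hσ1 : σ < 1)
    (N : V → ℝ)
    (hN0 : ∀ x : V, N x = 0 ↔ x = 0)
    (hNsmul : ∀ (c : LaurentSeries k) (x : V), N (c • x) = absLS k σ c * N x)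
    (hNadd : ∀ x y : V, N (x + y) ≤ max (N x) (N y))
    {d : ℕ}
    (b : Module.Basis (Fin d) (LaurentSeries k) V)
    (ω : Fin d → V)
    (hωmem : ∀ i, ω i ∈ latticeA k b)
    (hωnot : ∀ i, ω i ∉ Submodule.span (LaurentSeries k) (ω '' {j : Fin d | j < i}))
    (hωmin : ∀ i, ∀ x ∈ latticeA k b,
      x ∉ Submodule.span (LaurentSeries k) (ω '' {j : Fin d | j < i}) → N (ω i) ≤ N x) :
    ∀ i : Fin d, N (ω i) =
      ⨅ u : Submodule.span (LaurentSeries k) (ω '' {j : Fin d | j < i}), N (ω i - u) := by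
  -- basic facts about N
  have hNzero : N (0 : V) = 0 := (hN0 0).mpr rfl
  have hNneg : ∀ x : V, N (-x) = N x := by
    intro x
    rw [← neg_one_smul (LaurentSeries k) x, hNsmul, absLS_neg_one, one_mul]
  have hNnonneg : ∀ x : V, 0 ≤ N x := by
    intro x
    have := hNadd x (-x)
    rw [add_neg_cancel, hNzero, hNneg, max_self] at this
    linarith
  have hNsum : ∀ {ι : Type} (s : Finset ι) (f : ι → V) (c : ℝ), 0 ≤ c →
      (∀ t ∈ s, N (f t) ≤ c) → N (∑ t ∈ s, f t) ≤ c := by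
    intro ι s f c hc h
    induction s using Finset.cons_induction with
    | empty => simpa [hNzero] using hc
    | cons t s hts ih =>
        rw [Finset.sum_cons]
        refine le_trans (hNadd _ _) (max_le (h t (Finset.mem_cons_self t s))
          (ih fun u hu => h u (Finset.mem_cons_of_mem hu)))
  intro i
  set U := Submodule.span (LaurentSeries k) (ω '' {j : Fin d | j < i}) with hUdef
  -- the key inequality
  have key : ∀ u : V, u ∈ U → N (ω i) ≤ N (ω i - u) := by
    intro u hu
    rw [Submodule.mem_span_set'] at hu
    obtain ⟨n, f, g, hfg⟩ := hu
    -- choose polynomial approximations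
    choose a hA using fun t : Fin n => exists_approx σ hσ0 hσ1 (f t)
    set x : V := ω i - ∑ t, polyToLS k (a t) • (g t : V) with hx
    set s : V := ∑ t, (f t - polyToLS k (a t)) • (g t : V) with hs
    have hdecomp : ω i - u = x - s := by
      rw [hx, hs, ← hfg, sub_sub, ← Finset.sum_add_distrib]
      congr 1
      refine Finset.sum_congr rfl fun t _ => ?_
      rw [← add_smul, add_sub_cancel]
    -- each g t is ω of an index < i
    have hg : ∀ t : Fin n, ∃ j : Fin d, j < i ∧ (g t : V) = ω j := by
      intro t
      obtain ⟨j, hj, hje⟩ := (g t).2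
      exact ⟨j, hj, hje.symm⟩
    -- x is in the lattice
    have hxlat : x ∈ latticeA k b := by
      refine lattice_sub (hωmem i) (lattice_sum _ _ fun t _ => ?_)
      obtain ⟨j, hj, hje⟩ := hg t
      rw [hje]
      exact lattice_smul _ (hωmem j)
    -- x is not in U
    have hsumU : (∑ t, polyToLS k (a t) • (g t : V)) ∈ U := by
      refine Submodule.sum_mem _ fun t _ => Submodule.smul_mem _ _ ?_
      exact Submodule.subset_span (g t).2
    have hxU : x ∉ U := by
      intro hxu
      apply hωnot i
      have : ω i = x + ∑ t, polyToLS k (a t) • (g t : V) := by rw [hx]; abel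
      rw [this]
      exact Submodule.add_mem _ hxu hsumU
    have hxne : x ≠ 0 := fun h => hxU (h ▸ Submodule.zero_mem U)
    have hNx : N (ω i) ≤ N x := hωmin i x hxlat hxU
    have hNxpos : 0 < N x := lt_of_le_of_ne (hNnonneg x) fun h => hxne ((hN0 x).mp h.symm)
    -- each term of s is small
    have hsmall : ∀ t : Fin n, N ((f t - polyToLS k (a t)) • (g t : V)) ≤ σ * N x := by
      intro t
      rw [hNsmul]
      obtain ⟨j, hj, hje⟩ := hg t
      have hNgj : N (g t : V) ≤ N x := by
        rw [hje]
        refine hωmin j x hxlat ?_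
        intro hmem
        exact hxU (Submodule.span_mono
          (Set.image_mono fun j' (hj' : j' < j) => lt_trans hj' hj) hmem)
      exact mul_le_mul (hA t) hNgj (hNnonneg _) (le_of_lt hσ0)
    have hNs : N s ≤ σ * N x :=
      hNsum _ _ _ (mul_nonneg hσ0.le (hNnonneg x)) fun t _ => hsmall t
    have hNslt : N s < N x := lt_of_le_of_lt hNs (by nlinarith)
    -- ultrametric: N (x - s) ≥ N x
    have hfin : N x ≤ N (x - s) := by
      have := hNadd (x - s) s
      rw [sub_add_cancel] at this
      rcases le_max_iff.mp this with h | h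
      · exact h
      · linarith
    rw [hdecomp]
    exact le_trans hNx hfin
  -- conclude using the infimum
  have hbdd : BddBelow (Set.range fun u : U => N (ω i - u)) := by
    refine ⟨N (ω i), ?_⟩
    rintro y ⟨u, rfl⟩
    exact key u u.2
  refine le_antisymm (le_ciInf fun u => key u u.2) ?_
  have h0 : (⨅ u : U, N (ω i - u)) ≤ N (ω i - (0 : U)) := ciInf_le hbdd (0 : U)
  simpa using h0
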